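/- For M_A = M_B and n_S odd, ∑_{n_A=0}^{n_S} min{C(M_A + n_A - 1, n_A), C(M_A + (n_S - n_A) - 1, n_S - n_A)} = 2·C(M_A + (n_S-1)/2, (n_S-1)/2). -/

import Mathlib

lemma g_mono (MA : ℕ) : Monotone (fun k => (MA - 1 + k).choose k) := by
  intro a b hab
  have h1 : ∀ k, (MA - 1 + k).choose k = (MA - 1 + k).choose (MA - 1) := by
    intro k
    rw [← Nat.choose_symm (Nat.le_add_left k (MA - 1)), Nat.add_sub_cancel]
  simp only [h1]
  exact Nat.choose_le_choose _ (by omega)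

lemma hockey (MA : ℕ) (hA : 1 ≤ MA) :
    ∀ m, ∑ k ∈ Finset.range (m + 1), (MA - 1 + k).choose k = (MA + m).choose m := by
  intro m
  induction m with
  | zero => simp
  | succ n ih =>
    rw [Finset.sum_range_succ, ih]
    have h1 : MA - 1 + (n + 1) = MA + n := by omega
    rw [h1, ← Nat.choose_succ_succ]
    rfl

/-- Schmidt rank bound from dimensionality, odd case: for `M_A = M_B` and `n_S`
odd, the sum of the min dimensions equals `2·C(M_A + (n_S-1)/2, (n_S-1)/2)`. -/
theorem schmidt_rank_odd (MA nS : ℕ) (hA : 1 ≤ MA) (hodd : Odd nS) :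
    ∑ nA ∈ Finset.range (nS + 1),
        min ((MA + nA - 1).choose nA) ((MA + (nS - nA) - 1).choose (nS - nA))
      = 2 * (MA + (nS - 1) / 2).choose ((nS - 1) / 2) := by
  obtain ⟨m, hm⟩ := hodd
  subst hm
  have hdiv : (2 * m + 1 - 1) / 2 = m := by omega
  rw [hdiv]
  set g : ℕ → ℕ := fun k => (MA - 1 + k).choose k with hg
  have hterm : ∀ nA ∈ Finset.range (2 * m + 1 + 1),
      min ((MA + nA - 1).choose nA) ((MA + (2 * m + 1 - nA) - 1).choose (2 * m + 1 - nA))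
        = min (g nA) (g (2 * m + 1 - nA)) := by
    intro nA hnA
    have h1 : MA + nA - 1 = MA - 1 + nA := by omega
    have h2 : MA + (2 * m + 1 - nA) - 1 = MA - 1 + (2 * m + 1 - nA) := by omega
    rw [h1, h2]
  rw [Finset.sum_congr rfl hterm]
  have hsplit : ∑ nA ∈ Finset.range (2 * m + 1 + 1), min (g nA) (g (2 * m + 1 - nA))
      = ∑ nA ∈ Finset.range (m + 1), min (g nA) (g (2 * m + 1 - nA))
      + ∑ nA ∈ Finset.Ico (m + 1) (2 * m + 2), min (g nA) (g (2 * m + 1 - nA)) := by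
    rw [Finset.range_eq_Ico, ← Finset.sum_Ico_consecutive _ (by omega : 0 ≤ m + 1) (by omega : m + 1 ≤ 2 * m + 2), Finset.range_eq_Ico]
  rw [hsplit]
  have hfirst : ∑ nA ∈ Finset.range (m + 1), min (g nA) (g (2 * m + 1 - nA))
      = ∑ nA ∈ Finset.range (m + 1), g nA := by
    apply Finset.sum_congr rfl
    intro x hx
    rw [Finset.mem_range] at hx
    exact min_eq_left (g_mono MA (by omega : x ≤ 2 * m + 1 - x))
  have hsecond : ∑ nA ∈ Finset.Ico (m + 1) (2 * m + 2), min (g nA) (g (2 * m + 1 - nA))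
      = ∑ nA ∈ Finset.range (m + 1), g nA := by
    rw [Finset.sum_Ico_eq_sum_range]
    have heq : 2 * m + 2 - (m + 1) = m + 1 := by omega
    rw [heq]
    have hstep : ∀ i ∈ Finset.range (m + 1),
        min (g (m + 1 + i)) (g (2 * m + 1 - (m + 1 + i))) = g (m - i) := by
      intro i hi
      rw [Finset.mem_range] at hi
      have h3 : 2 * m + 1 - (m + 1 + i) = m - i := by omega
      rw [h3]
      exact min_eq_right (g_mono MA (by omega : m - i ≤ m + 1 + i))
    rw [Finset.sum_congr rfl hstep]
    have := Finset.sum_range_reflect g (m + 1)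
    simpa using this
  rw [hfirst, hsecond, hockey MA hA m, two_mul]
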